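/- Let $0 < a_n \le a_{n+1} \le 1$ with $a_n \to 1$, $b_n \equiv 0$, and $x \in (0,2)$. Suppose $x/a_n \ge 2$ for $n \le N$ and define $\gamma_n \ge 0$ by $x/a_n = 2\cosh\gamma_n$ (so $\gamma_{n+1} \le \gamma_n$ and $a_n/a_{n+1} = \cosh\gamma_{n+1}/\cosh\gamma_n$). Let $\psi_{-1}=0$, $\psi_0 = 1$, $\psi_{n+1} = (1+e^{-2\gamma_{n+1}})\psi_n - \frac{a_n}{a_{n+1}} e^{-(\gamma_n+\gamma_{n+1})}\psi_{n-1}$. Then $\psi_{n+1} \ge \psi_n$ for $0 \le n < N$, so $\psi_n \ge 1$. -/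
import Mathlib


theorem stmt_10 (a γ ψ : ℤ → ℝ) (N : ℤ) (x : ℝ)
    (ha0 : ∀ n : ℤ, 0 < a n) (hamono : ∀ n : ℤ, a n ≤ a (n + 1))
    (hale : ∀ n : ℤ, a n ≤ 1)
    (halim : Filter.Tendsto a Filter.atTop (nhds 1))
    (hx : 0 < x ∧ x < 2)
    (hforb : ∀ n ≤ N, 2 ≤ x / a n)
    (hγ : ∀ n ≤ N, 0 ≤ γ n ∧ x / a n = 2 * Real.cosh (γ n))
    (hψm1 : ψ (-1) = 0) (hψ0 : ψ 0 = 1)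
    (hrec : ∀ n : ℤ, 0 ≤ n → n < N →
      ψ (n + 1) = (1 + Real.exp (-2 * γ (n + 1))) * ψ n
        - a n / a (n + 1) * Real.exp (-(γ n + γ (n + 1))) * ψ (n - 1)) :
    (∀ n : ℤ, 0 ≤ n → n < N → ψ n ≤ ψ (n + 1)) ∧
    (∀ n : ℤ, 0 ≤ n → n ≤ N → 1 ≤ ψ n) := by
  have key : ∀ m : ℕ, (m : ℤ) ≤ N →
      0 ≤ ψ ((m : ℤ) - 1) ∧ ψ ((m : ℤ) - 1) ≤ ψ (m : ℤ) ∧ 1 ≤ ψ (m : ℤ) := by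
    intro m
    induction m with
    | zero => intro _; norm_num [hψm1, hψ0]
    | succ k ih =>
      intro hk1
      push_cast at hk1
      have hkN : (k : ℤ) ≤ N := by omega
      have hkN' : (k : ℤ) < N := by omega
      obtain ⟨h0, h1, h2⟩ := ih hkN
      have step : ψ (k : ℤ) ≤ ψ ((k : ℤ) + 1) := by
        have hrec' := hrec k (by omega) hkN'
        have hγk := hγ k hkN
        have hγk1 := hγ ((k : ℤ) + 1) (by omega)
        have hcosh : Real.cosh (γ ((k : ℤ) + 1)) ≤ Real.cosh (γ (k : ℤ)) := by
          have hax : x / a ((k : ℤ) + 1) ≤ x / a (k : ℤ) :=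
            div_le_div_of_nonneg_left hx.1.le (ha0 _) (hamono k)
          have e1 := hγk.2; have e2 := hγk1.2
          linarith
        have hγle : γ ((k : ℤ) + 1) ≤ γ (k : ℤ) := by
          have h := Real.cosh_le_cosh.mp hcosh
          rwa [abs_of_nonneg hγk1.1, abs_of_nonneg hγk.1] at h
        have hc1 : a (k : ℤ) / a ((k : ℤ) + 1) ≤ 1 :=
          div_le_one_of_le₀ (hamono k) (ha0 _).le
        have hc0 : 0 ≤ a (k : ℤ) / a ((k : ℤ) + 1) := div_nonneg (ha0 _).le (ha0 _).le
        have he : Real.exp (-(γ (k : ℤ) + γ ((k : ℤ) + 1)))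
            ≤ Real.exp (-2 * γ ((k : ℤ) + 1)) :=
          Real.exp_le_exp.mpr (by linarith)
        have hepos : (0 : ℝ) < Real.exp (-2 * γ ((k : ℤ) + 1)) := Real.exp_pos _
        have hepos' : (0 : ℝ) < Real.exp (-(γ (k : ℤ) + γ ((k : ℤ) + 1))) := Real.exp_pos _
        have hce : a (k : ℤ) / a ((k : ℤ) + 1) * Real.exp (-(γ (k : ℤ) + γ ((k : ℤ) + 1)))
            ≤ Real.exp (-2 * γ ((k : ℤ) + 1)) := by
          calc a (k : ℤ) / a ((k : ℤ) + 1) * Real.exp (-(γ (k : ℤ) + γ ((k : ℤ) + 1)))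
              ≤ 1 * Real.exp (-2 * γ ((k : ℤ) + 1)) :=
                mul_le_mul hc1 he hepos'.le one_pos.le
            _ = _ := one_mul _
        nlinarith [mul_le_mul_of_nonneg_right hce h0,
          mul_le_mul_of_nonneg_left h1 hepos.le]
      have hsimp : ((k : ℤ) + 1) - 1 = (k : ℤ) := by ring
      push_cast
      rw [hsimp]
      exact ⟨by linarith, step, by linarith⟩
  constructor
  · intro n hn hnN
    have h := key (n + 1).toNat (by rw [Int.toNat_of_nonneg (by omega)]; omega)
    rw [Int.toNat_of_nonneg (by omega : (0:ℤ) ≤ n + 1)] at h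
    have := h.2.1
    simpa using this
  · intro n hn hnN
    have h := key n.toNat (by rw [Int.toNat_of_nonneg hn]; exact hnN)
    rw [Int.toNat_of_nonneg hn] at h
    exact h.2.2
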